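/- Fix real numbers k, a, b (standing for the wavenumber k, the equilibrium velocity v₀(z), and its derivative v₀'(z) at a point z) and a real number M ≠ 0. Define the 3×3 complex matrices N₀ = [[k a, −i b, k], [0, k a, 0], [k/M², 0, k a]] and N₁ = [[0,0,0], [0,0,−i], [0, −i/M², 0]], and P = diag(1, −1, 1). Then P² = 1 and P · conj(N₀) · P = N₀ and P · conj(N₁) · P = N₁; i.e. both N₀ and N₁ are PT-symmetric with respect to the PT operator ψ ↦ P · conj(ψ). -/
import Mathlib


open Matrix

/-- PT symmetry of the Kelvin–Helmholtz Hamiltonian (Eqs. (19)–(21) of the paper):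
the matrices `N₀`, `N₁` of the linearized shear-layer Hamiltonian are PT-symmetric with
respect to the parity operator `P = diag(1, −1, 1)`. -/
theorem stmt_11 (k a b M : ℝ) (hM : M ≠ 0)
    (N₀ N₁ P : Matrix (Fin 3) (Fin 3) ℂ)
    (hN₀ : N₀ = !![(k * a : ℂ), -Complex.I * b, (k : ℂ);
                   0, (k * a : ℂ), 0;
                   (k / M ^ 2 : ℂ), 0, (k * a : ℂ)])
    (hN₁ : N₁ = !![0, 0, 0;
                   0, 0, -Complex.I;
                   0, -Complex.I / (M ^ 2 : ℂ), 0])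
    (hP : P = !![1, 0, 0; 0, -1, 0; 0, 0, 1]) :
    P * P = 1 ∧
    P * N₀.map (starRingEnd ℂ) * P = N₀ ∧
    P * N₁.map (starRingEnd ℂ) * P = N₁ := by
  subst hN₀ hN₁ hP
  refine ⟨?_, ?_, ?_⟩ <;>
  · ext i j
    fin_cases i <;> fin_cases j <;>
      simp [Matrix.mul_apply, Matrix.vecMul, dotProduct, Matrix.vecHead, Matrix.vecTail, Fin.sum_univ_succ, Matrix.one_apply, map_div₀,
        Complex.conj_ofReal, Complex.conj_I, mul_comm, neg_div]
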